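/- Convergence of the proximal point algorithm: let (H,d) be a locally compact Hadamard space and f : H → (−∞,∞] a proper convex lower semicontinuous function attaining its minimum on H. Let x₀ ∈ H, let (λ_k)_{k∈ℕ₀} be positive reals with Σ_{k=0}^∞ λ_k = ∞, and for each k ∈ ℕ suppose x_k is a minimizer of the function y ↦ f(y) + (1/(2λ_{k−1}))·d(y,x_{k−1})². Then the sequence (x_k) converges to a minimizer of f. -/

import Mathlib

open Filter Topology

/-- A Hadamard space structure on a metric space `H`: a geodesic combination map
`geo x y t = (1-t)x ⊕ ty` satisfying the geodesic axioms and the CAT(0) inequality.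
(Completeness is imposed via the `CompleteSpace` instance in the theorems.) -/
structure Hadamard (H : Type*) [MetricSpace H] : Type _ where
  geo : H → H → ℝ → H
  geo_zero : ∀ x y : H, geo x y 0 = x
  geo_one : ∀ x y : H, geo x y 1 = y
  geo_dist : ∀ x y : H, ∀ s ∈ Set.Icc (0 : ℝ) 1, ∀ t ∈ Set.Icc (0 : ℝ) 1,
    dist (geo x y s) (geo x y t) = |s - t| * dist x y
  cat0 : ∀ z x y : H, ∀ t ∈ Set.Icc (0 : ℝ) 1,
    dist z (geo x y t) ^ 2
      ≤ (1 - t) * dist z x ^ 2 + t * dist z y ^ 2 - t * (1 - t) * dist x y ^ 2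

/-- Geodesic retraction: any point can be moved onto the ball of radius `r` around `z`
moving it by at most `max (dist z w - r) 0`. -/
lemma Hadamard.retract {H : Type*} [MetricSpace H] (G : Hadamard H) (z w : H) {r : ℝ}
    (hr : 0 ≤ r) : ∃ w' : H, dist z w' ≤ r ∧ dist w w' ≤ max (dist z w - r) 0 := by
  by_cases h : dist z w ≤ r
  · exact ⟨w, h, by simpa using le_max_right (dist z w - r) 0⟩
  · push_neg at h
    have hd : 0 < dist z w := lt_of_le_of_lt hr h
    set s : ℝ := r / dist z w with hs
    have hs0 : 0 ≤ s := div_nonneg hr hd.le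
    have hs1 : s ≤ 1 := by rw [div_le_one hd]; exact h.le
    refine ⟨G.geo z w s, ?_, ?_⟩
    · have := G.geo_dist z w 0 ⟨le_refl _, zero_le_one⟩ s ⟨hs0, hs1⟩
      rw [G.geo_zero] at this
      rw [this]
      have : |(0:ℝ) - s| = s := by rw [abs_sub_comm]; simp [abs_of_nonneg hs0]
      rw [this, hs, div_mul_cancel₀ _ hd.ne']
    · have := G.geo_dist z w 1 ⟨zero_le_one, le_refl _⟩ s ⟨hs0, hs1⟩
      rw [G.geo_one] at this
      rw [this, abs_of_nonneg (by linarith : (0:ℝ) ≤ 1 - s)]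
      have : (1 - s) * dist z w = dist z w - r := by
        rw [sub_mul, one_mul, hs, div_mul_cancel₀ _ hd.ne']
      rw [this]
      exact le_max_left _ _

/-- Hopf–Rinow: in a complete locally compact geodesic space, closed balls are compact. -/
lemma Hadamard.isCompact_closedBall {H : Type*} [MetricSpace H] [CompleteSpace H]
    [LocallyCompactSpace H] (G : Hadamard H) (z : H) (r : ℝ) :
    IsCompact (Metric.closedBall z r) := by
  by_contra hcon
  set B : Set ℝ := {s : ℝ | ¬ IsCompact (Metric.closedBall z s)} with hB
  have hne : B.Nonempty := ⟨r, hcon⟩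
  have hpos : ∀ s ∈ B, 0 < s := by
    intro s hs
    by_contra hneg
    push_neg at hneg
    rcases lt_or_eq_of_le hneg with h | h
    · exact hs (by rw [Metric.closedBall_eq_empty.2 h]; exact isCompact_empty)
    · exact hs (by rw [h, Metric.closedBall_zero]; exact isCompact_singleton)
  have hbdd : BddBelow B := ⟨0, fun s hs => (hpos s hs).le⟩
  set R : ℝ := sInf B with hR
  have hR0 : 0 ≤ R := le_csInf hne (fun s hs => (hpos s hs).le)
  -- balls of radius < R are compact
  have hlt : ∀ s : ℝ, s < R → IsCompact (Metric.closedBall z s) := by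
    intro s hs
    by_contra h
    exact absurd (csInf_le hbdd h) (not_le.mpr hs)
  -- the ball of radius R is compact
  have hRcomp : IsCompact (Metric.closedBall z R) := by
    refine TotallyBounded.isCompact_of_isClosed ?_ Metric.isClosed_closedBall
    rw [Metric.totallyBounded_iff]
    intro ε hε
    by_cases hsmall : R ≤ ε / 2
    · refine ⟨{z}, Set.finite_singleton z, ?_⟩
      intro w hw
      simp only [Set.mem_singleton_iff, Set.iUnion_iUnion_eq_left]
      rw [Metric.mem_closedBall] at hw
      exact Metric.mem_ball.mpr (by rw [dist_comm] at hw ⊢; linarith)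
    · push_neg at hsmall
      have hR' : 0 ≤ R - ε / 2 := by linarith
      have hcomp' : IsCompact (Metric.closedBall z (R - ε/2)) :=
        hlt _ (by linarith)
      obtain ⟨t, htfin, htcov⟩ :=
        Metric.totallyBounded_iff.mp hcomp'.totallyBounded (ε/2) (by linarith)
      refine ⟨t, htfin, ?_⟩
      intro w hw
      rw [Metric.mem_closedBall, dist_comm] at hw
      obtain ⟨w', hw'1, hw'2⟩ := G.retract z w hR'
      have hw'mem : w' ∈ Metric.closedBall z (R - ε/2) := Metric.mem_closedBall.mpr
        (by rw [dist_comm]; exact hw'1)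
      obtain ⟨y, hyt, hyw'⟩ := Set.mem_iUnion₂.mp (htcov hw'mem)
      refine Set.mem_iUnion₂.mpr ⟨y, hyt, Metric.mem_ball.mpr ?_⟩
      have h1 : dist w w' ≤ ε/2 := le_trans hw'2 (by
        rw [max_le_iff]; constructor <;> linarith [dist_nonneg (x := z) (y := w)])
      calc dist w y ≤ dist w w' + dist w' y := dist_triangle _ _ _
        _ < ε/2 + ε/2 := by have := Metric.mem_ball.mp hyw'; linarith
        _ = ε := by ring
  -- a slightly bigger ball is compact, contradiction
  -- choose compact neighborhoods
  have hnbhd : ∀ p : H, ∃ K : Set H, IsCompact K ∧ K ∈ 𝓝 p := fun p => exists_compact_mem_nhds p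
  choose K hKcomp hKnhds using hnbhd
  obtain ⟨t, _, htcov⟩ := hRcomp.elim_nhds_subcover (fun p => interior (K p))
    (fun p _ => isOpen_interior.mem_nhds (mem_interior_iff_mem_nhds.mpr (hKnhds p)))
  have hUopen : IsOpen (⋃ p ∈ t, interior (K p)) :=
    isOpen_biUnion (fun p _ => isOpen_interior)
  obtain ⟨δ, hδpos, hδ⟩ := hRcomp.exists_cthickening_subset_open hUopen htcov
  have hCcomp : IsCompact (⋃ p ∈ t, K p) := t.isCompact_biUnion (fun p _ => hKcomp p)
  have hbig : IsCompact (Metric.closedBall z (R + δ)) := by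
    refine hCcomp.of_isClosed_subset Metric.isClosed_closedBall ?_
    intro w hw
    rw [Metric.mem_closedBall, dist_comm] at hw
    obtain ⟨w', hw'1, hw'2⟩ := G.retract z w hR0
    have hw'mem : w' ∈ Metric.closedBall z R := Metric.mem_closedBall.mpr
      (by rw [dist_comm]; exact hw'1)
    have h1 : dist w w' ≤ δ := le_trans hw'2 (by
      rw [max_le_iff]; constructor <;> linarith [dist_nonneg (x := z) (y := w)])
    have : w ∈ Metric.cthickening δ (Metric.closedBall z R) :=
      Metric.mem_cthickening_of_dist_le w w' δ _ hw'mem h1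
    have := hδ this
    obtain ⟨p, hpt, hpint⟩ := Set.mem_iUnion₂.mp this
    exact Set.mem_iUnion₂.mpr ⟨p, hpt, interior_subset hpint⟩
  -- every s ≤ R + δ is not in B, so R + δ is a lower bound: contradiction
  have : R + δ ≤ R := by
    apply le_csInf hne
    intro s hs
    by_contra hlt'
    push_neg at hlt'
    exact hs (hbig.of_isClosed_subset Metric.isClosed_closedBall
      (Metric.closedBall_subset_closedBall hlt'.le))
  linarith

/-- A function `f : H → (-∞,∞]` is (geodesically) convex if along every geodesic
`t ↦ (1-t)x ⊕ ty` it satisfies the convexity inequality. -/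
def GeoConvex {H : Type*} [MetricSpace H] (G : Hadamard H) (f : H → EReal) : Prop :=
  ∀ x y : H, ∀ t ∈ Set.Icc (0 : ℝ) 1,
    f (G.geo x y t) ≤ ((1 - t : ℝ) : EReal) * f x + ((t : ℝ) : EReal) * f y

/-- Convergence of the proximal point algorithm in a locally compact Hadamard space:
if `f` is proper convex lsc and attains its minimum, `(λ_k)` are positive with
`∑ λ_k = ∞`, and `x (k+1)` minimizes `y ↦ f y + (1/(2λ_k)) d(y, x k)²`, then
`(x k)` converges to a minimizer of `f`. -/
theorem proximal_point_algorithm_converges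
    {H : Type*} [MetricSpace H] [CompleteSpace H] [LocallyCompactSpace H]
    (G : Hadamard H)
    (f : H → EReal) (hf_ne_bot : ∀ x : H, f x ≠ ⊥)
    (hproper : ∃ x : H, f x ≠ ⊤)
    (hconv : GeoConvex G f) (hlsc : LowerSemicontinuous f)
    (hmin : ∃ z : H, ∀ x : H, f z ≤ f x)
    (lam : ℕ → ℝ) (hlam_pos : ∀ k, 0 < lam k) (hlam_div : ¬ Summable lam)
    (x : ℕ → H)
    (hx : ∀ k : ℕ, ∀ y : H,
      f (x (k + 1)) + ((1 / (2 * lam k) * dist (x (k + 1)) (x k) ^ 2 : ℝ) : EReal)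
        ≤ f y + ((1 / (2 * lam k) * dist y (x k) ^ 2 : ℝ) : EReal)) :
    ∃ z : H, (∀ y : H, f z ≤ f y) ∧ Tendsto x atTop (𝓝 z) := by
  obtain ⟨z, hz⟩ := hmin
  obtain ⟨x₀, hx₀⟩ := hproper
  have hz_top : f z ≠ ⊤ := ne_top_of_le_ne_top hx₀ (hz x₀)
  -- the iterates (from index 1 on) have finite value
  have hx_top : ∀ k, f (x (k+1)) ≠ ⊤ := by
    intro k hk
    have h := hx k z
    rw [hk, EReal.top_add_coe] at h
    exact absurd (top_le_iff.mp h)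
      (EReal.add_lt_top hz_top (EReal.coe_ne_top _)).ne
  -- KEY inequality of the proximal step
  have key : ∀ k : ℕ, ∀ y : H, f y ≠ ⊤ →
      2 * lam k * ((f (x (k+1))).toReal - (f y).toReal)
        + dist (x (k+1)) (x k) ^ 2 + dist (x (k+1)) y ^ 2 ≤ dist y (x k) ^ 2 := by
    intro k y hy
    set A : ℝ := (f (x (k+1))).toReal with hA
    set Fy : ℝ := (f y).toReal with hFy
    have hm : f (x (k+1)) = ((A : ℝ) : EReal) :=
      (EReal.coe_toReal (hx_top k) (hf_ne_bot _)).symm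
    have hyc : f y = ((Fy : ℝ) : EReal) :=
      (EReal.coe_toReal hy (hf_ne_bot _)).symm
    have hL : (0:ℝ) < 2 * lam k := by have := hlam_pos k; linarith
    have step : ∀ t : ℝ, 0 < t → t ≤ 1 →
        2 * lam k * (A - Fy) + dist (x (k+1)) (x k) ^ 2
          + (1 - t) * dist (x (k+1)) y ^ 2 ≤ dist y (x k) ^ 2 := by
      intro t ht0 ht1
      have htI : t ∈ Set.Icc (0:ℝ) 1 := ⟨ht0.le, ht1⟩
      have h2 := hconv (x (k+1)) y t htI
      rw [hm, hyc] at h2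
      have h2' : f (G.geo (x (k+1)) y t) ≤ (((1-t) * A + t * Fy : ℝ) : EReal) := by
        push_cast
        exact h2
      have hgtop : f (G.geo (x (k+1)) y t) ≠ ⊤ :=
        ne_top_of_le_ne_top (EReal.coe_ne_top _) h2'
      set Gr : ℝ := (f (G.geo (x (k+1)) y t)).toReal with hGr
      have hg : f (G.geo (x (k+1)) y t) = ((Gr : ℝ) : EReal) :=
        (EReal.coe_toReal hgtop (hf_ne_bot _)).symm
      have h2r : Gr ≤ (1-t) * A + t * Fy := by
        rw [hg] at h2'
        exact_mod_cast h2'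
      have h1 := hx k (G.geo (x (k+1)) y t)
      rw [hm, hg] at h1
      have h1r : A + 1/(2*lam k) * dist (x (k+1)) (x k) ^ 2
          ≤ Gr + 1/(2*lam k) * dist (G.geo (x (k+1)) y t) (x k) ^ 2 := by
        exact_mod_cast h1
      -- clear the denominator
      have h1m : 2 * lam k * A + dist (x (k+1)) (x k) ^ 2
          ≤ 2 * lam k * Gr + dist (G.geo (x (k+1)) y t) (x k) ^ 2 := by
        have hmul := mul_le_mul_of_nonneg_left h1r hL.le
        have e : ∀ u v : ℝ, 2 * lam k * (u + 1/(2*lam k) * v) = 2 * lam k * u + v := by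
          intro u v
          rw [mul_add, ← mul_assoc (2 * lam k), mul_one_div_cancel hL.ne', one_mul]
        rw [e, e] at hmul
        exact hmul
      have h3 := G.cat0 (x k) (x (k+1)) y t htI
      rw [dist_comm (x k) (G.geo (x (k+1)) y t), dist_comm (x k) (x (k+1)),
        dist_comm (x k) y] at h3
      nlinarith [mul_le_mul_of_nonneg_left h2r hL.le, mul_pos hL ht0, ht0,
        sq_nonneg (dist (x (k+1)) y)]
    -- let t → 0
    have hfin : 2 * lam k * (A - Fy) + dist (x (k+1)) (x k) ^ 2
        + dist (x (k+1)) y ^ 2 ≤ dist y (x k) ^ 2 := by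
      apply le_of_forall_pos_le_add
      intro ε hε
      set D : ℝ := dist (x (k+1)) y ^ 2 with hD
      have hD0 : 0 ≤ D := sq_nonneg _
      set t : ℝ := min 1 (ε / (D + 1)) with ht
      have ht0 : 0 < t := lt_min one_pos (div_pos hε (by linarith))
      have ht1 : t ≤ 1 := min_le_left _ _
      have h := step t ht0 ht1
      have htD : t * D ≤ ε := by
        calc t * D ≤ (ε / (D + 1)) * D :=
              mul_le_mul_of_nonneg_right (min_le_right _ _) hD0
          _ ≤ (ε / (D + 1)) * (D + 1) := by
              apply mul_le_mul_of_nonneg_left (by linarith)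
                (div_nonneg hε.le (by linarith))
          _ = ε := div_mul_cancel₀ _ (by linarith : (0:ℝ) < D + 1).ne'
      nlinarith
    linarith [hfin]
  -- basic facts
  have hfz_le : ∀ k, (f z).toReal ≤ (f (x (k+1))).toReal :=
    fun k => EReal.toReal_le_toReal (hz _) (hf_ne_bot _) (hx_top _)
  -- Fejér monotonicity with respect to any minimizer with finite value
  have fejer : ∀ w : H, f w ≠ ⊤ → (∀ y : H, f w ≤ f y) → ∀ k,
      dist (x (k+1)) w ≤ dist (x k) w := by
    intro w hw hwmin k
    have h := key k w hw
    have hle : (f w).toReal ≤ (f (x (k+1))).toReal :=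
      EReal.toReal_le_toReal (hwmin _) (hf_ne_bot _) (hx_top _)
    have h2 : dist (x (k+1)) w ^ 2 ≤ dist (x k) w ^ 2 := by
      rw [dist_comm (x k) w]
      nlinarith [hlam_pos k, sq_nonneg (dist (x (k+1)) (x k))]
    nlinarith [dist_nonneg (x := x (k+1)) (y := w), dist_nonneg (x := x k) (y := w)]
  -- f (x n) is antitone (from index 1)
  have hanti : Antitone (fun n => (f (x (n+1))).toReal) := by
    apply antitone_nat_of_succ_le
    intro n
    have h := key (n+1) (x (n+1)) (hx_top n)
    simp only [dist_self] at h
    nlinarith [hlam_pos (n+1), sq_nonneg (dist (x (n+2)) (x (n+1)))]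
  -- telescoping sum
  have tele : ∀ n : ℕ, ∑ k ∈ Finset.range n,
      2 * lam k * ((f (x (k+1))).toReal - (f z).toReal)
        ≤ dist (x 0) z ^ 2 - dist (x n) z ^ 2 := by
    intro n
    induction n with
    | zero => simp
    | succ n ih =>
      rw [Finset.sum_range_succ]
      have h := key n z hz_top
      rw [dist_comm z (x n)] at h
      nlinarith [sq_nonneg (dist (x (n+1)) (x n))]
  -- partial sums of lam
  have hS : Tendsto (fun n => ∑ k ∈ Finset.range (n+1), lam k) atTop atTop :=
    ((not_summable_iff_tendsto_nat_atTop_of_nonneg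
      (fun i => (hlam_pos i).le)).mp hlam_div).comp (tendsto_add_atTop_nat 1)
  have hSpos : ∀ n : ℕ, 0 < ∑ k ∈ Finset.range (n+1), lam k := by
    intro n
    apply Finset.sum_pos (fun k _ => hlam_pos k)
    exact Finset.nonempty_range_iff.mpr (Nat.succ_ne_zero n)
  -- the value gap tends to 0
  have hgap : Tendsto (fun n => (f (x (n+1))).toReal - (f z).toReal) atTop (𝓝 0) := by
    have hub : ∀ n : ℕ, (f (x (n+1))).toReal - (f z).toReal
        ≤ dist (x 0) z ^ 2 / (2 * ∑ k ∈ Finset.range (n+1), lam k) := by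
      intro n
      rw [le_div_iff₀ (by have := hSpos n; linarith)]
      have h1 : ∑ k ∈ Finset.range (n+1),
          2 * lam k * ((f (x (n+1))).toReal - (f z).toReal)
          ≤ ∑ k ∈ Finset.range (n+1),
            2 * lam k * ((f (x (k+1))).toReal - (f z).toReal) := by
        apply Finset.sum_le_sum
        intro k hk
        have hmono : (f (x (n+1))).toReal ≤ (f (x (k+1))).toReal :=
          hanti (Nat.le_of_lt_succ (Finset.mem_range.mp hk))
        nlinarith [hlam_pos k]
      have h2 := tele (n+1)
      have h3 : ((f (x (n+1))).toReal - (f z).toReal)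
          * (2 * ∑ k ∈ Finset.range (n+1), lam k)
          = ∑ k ∈ Finset.range (n+1),
            2 * lam k * ((f (x (n+1))).toReal - (f z).toReal) := by
        rw [Finset.mul_sum, Finset.mul_sum]
        exact Finset.sum_congr rfl fun k _ => by ring
      rw [h3]
      nlinarith [sq_nonneg (dist (x (n+1)) z), h1.trans h2]
    have hlb : ∀ n : ℕ, (0:ℝ) ≤ (f (x (n+1))).toReal - (f z).toReal :=
      fun n => by linarith [hfz_le n]
    have hub_tendsto : Tendsto
        (fun n => dist (x 0) z ^ 2 / (2 * ∑ k ∈ Finset.range (n+1), lam k))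
        atTop (𝓝 0) :=
      Tendsto.div_atTop tendsto_const_nhds (hS.const_mul_atTop two_pos)
    exact tendsto_of_tendsto_of_tendsto_of_le_of_le tendsto_const_nhds hub_tendsto hlb hub
  -- f (x n) tends to f z in EReal
  have hftend : Tendsto (fun n => f (x n)) atTop (𝓝 (f z)) := by
    rw [← Filter.tendsto_add_atTop_iff_nat 1]
    have h1 : Tendsto (fun n => (f (x (n+1))).toReal) atTop (𝓝 ((f z).toReal)) := by
      have := hgap.add_const ((f z).toReal)
      simpa using this
    have h2 : Tendsto (fun n => (((f (x (n+1))).toReal : ℝ) : EReal)) atTop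
        (𝓝 (((f z).toReal : ℝ) : EReal)) :=
      (continuous_coe_real_ereal.tendsto _).comp h1
    have e1 : (fun n => (((f (x (n+1))).toReal : ℝ) : EReal)) = fun n => f (x (n+1)) := by
      funext n
      exact EReal.coe_toReal (hx_top n) (hf_ne_bot _)
    have e2 : (((f z).toReal : ℝ) : EReal) = f z := EReal.coe_toReal hz_top (hf_ne_bot _)
    rwa [e1, e2] at h2
  -- the sequence is bounded, take a convergent subsequence
  have hDanti : Antitone (fun n => dist (x n) z) :=
    antitone_nat_of_succ_le (fun n => fejer z hz_top hz n)
  have hball : ∀ n, x n ∈ Metric.closedBall z (dist (x 0) z) := by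
    intro n
    rw [Metric.mem_closedBall]
    exact hDanti (Nat.zero_le n)
  obtain ⟨w, hwmem, φ, hφmono, hφtend⟩ :=
    (G.isCompact_closedBall z (dist (x 0) z)).tendsto_subseq hball
  -- w is a minimizer
  have hsubval : Tendsto (fun k => f (x (φ k))) atTop (𝓝 (f z)) :=
    hftend.comp hφmono.tendsto_atTop
  have hfw : f w ≤ f z := by
    by_contra hcon
    push_neg at hcon
    obtain ⟨y, hy1, hy2⟩ := exists_between hcon
    have hev : ∀ᶠ k in atTop, y < f (x (φ k)) :=
      hφtend.eventually (hlsc w y hy2)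
    have : y ≤ f z := ge_of_tendsto hsubval (hev.mono fun k hk => hk.le)
    exact absurd hy1 (not_lt.mpr this)
  have hwmin : ∀ y : H, f w ≤ f y := fun y => hfw.trans (hz y)
  have hw_top : f w ≠ ⊤ := ne_top_of_le_ne_top hz_top hfw
  -- full convergence via Fejér monotonicity w.r.t. w
  have hDw : Antitone (fun n => dist (x n) w) :=
    antitone_nat_of_succ_le (fejer w hw_top hwmin)
  have hsub0 : Tendsto (fun k => dist (x (φ k)) w) atTop (𝓝 0) := by
    have := hφtend.dist (tendsto_const_nhds (x := w))
    simpa using this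
  refine ⟨w, hwmin, ?_⟩
  rw [Metric.tendsto_atTop]
  intro ε hε
  obtain ⟨K, hK⟩ := (hsub0.eventually (gt_mem_nhds hε)).exists
  refine ⟨φ K, fun n hn => ?_⟩
  exact lt_of_le_of_lt (hDw hn) hK
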